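/- Suppose ψ ∈ L²(μ) is a unit vector lying in the kernel of the Ruelle operator L, and let ψ̂ be the rank-one orthogonal projection φ ↦ ⟨φ,ψ⟩ψ. Then ‖[D, π(ψ̂)]‖ = ‖K ψ̂ − ψ̂ K‖ = ‖L ψ̂ − ψ̂ L‖ = 1. Moreover, if ψ = K^k(f) for some k ≥ 1 and some unit vector f ∈ L²(μ) with Lf = 0, then likewise ‖[D, π(ψ̂)]‖ = 1. -/

import Mathlib

open MeasureTheory ContinuousLinearMap
open scoped RealInnerProductSpace InnerProductSpace ENNReal

noncomputable section

/-- The shift space `Ω = {0,1}^ℕ`, with `false` playing the role of the symbol `0`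
and `true` of the symbol `1`. -/
abbrev Ω : Type := ℕ → Bool

/-- The shift map `σ`, `σ(x)ₙ = x_{n+1}`. -/
def shiftMap : Ω → Ω := fun x n => x (n + 1)

/-- Prepending a symbol: `consSeq a x = ax`. -/
def consSeq (a : Bool) (x : Ω) : Ω := fun n => Nat.casesOn n a (fun k => x k)

/-- The cylinder set `[w]` of sequences beginning with the finite word `w`. -/
def cylinder (w : List Bool) : Set Ω := {x | ∀ i : Fin w.length, x (i : ℕ) = w.get i}

/-- The Hilbert space `L²(μ)` (real). -/
abbrev E (μ : Measure Ω) := Lp (α := Ω) ℝ 2 μ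

/-- The Hilbert space `H = L²(μ) × L²(μ)` with the norm `√(‖φ‖² + ‖ψ‖²)`. -/
abbrev HS (μ : Measure Ω) := WithLp 2 (E μ × E μ)

variable {μ : Measure Ω}

/-- The diagonal block operator `(φ, ψ) ↦ (A₁φ, A₂ψ)` on `H`. -/
def blockDiag (A₁ A₂ : E μ →L[ℝ] E μ) : HS μ →L[ℝ] HS μ :=
  ((WithLp.prodContinuousLinearEquiv 2 ℝ (E μ) (E μ)).symm.toContinuousLinearMap).comp
    (((A₁.comp (ContinuousLinearMap.fst ℝ (E μ) (E μ))).prod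
        (A₂.comp (ContinuousLinearMap.snd ℝ (E μ) (E μ)))).comp
      (WithLp.prodContinuousLinearEquiv 2 ℝ (E μ) (E μ)).toContinuousLinearMap)

/-- The antidiagonal block operator `(φ, ψ) ↦ (A₁ψ, A₂φ)` on `H`. -/
def blockAntidiag (A₁ A₂ : E μ →L[ℝ] E μ) : HS μ →L[ℝ] HS μ :=
  ((WithLp.prodContinuousLinearEquiv 2 ℝ (E μ) (E μ)).symm.toContinuousLinearMap).comp
    (((A₁.comp (ContinuousLinearMap.snd ℝ (E μ) (E μ))).prod
        (A₂.comp (ContinuousLinearMap.fst ℝ (E μ) (E μ)))).comp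
      (WithLp.prodContinuousLinearEquiv 2 ℝ (E μ) (E μ)).toContinuousLinearMap)

/-- The diagonal representation `π(A)(φ,ψ) = (Aφ, Aψ)`. -/
def diagRep (A : E μ →L[ℝ] E μ) : HS μ →L[ℝ] HS μ := blockDiag A A

/-- The Dirac operator `D(φ,ψ) = (Kψ, Lφ)` associated with the pair `(K, L)`. -/
def dirac (K L : E μ →L[ℝ] E μ) : HS μ →L[ℝ] HS μ := blockAntidiag K L

/-- The commutator `[D, π(A)]`. -/
def commD (K L A : E μ →L[ℝ] E μ) : HS μ →L[ℝ] HS μ :=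
  (dirac K L).comp (diagRep A) - (diagRep A).comp (dirac K L)

/-- The rank-one orthogonal projection onto the span of the unit vector `ψ`:
`φ ↦ ⟪ψ, φ⟫ • ψ`. -/
def rankOneProj (ψ : E μ) : E μ →L[ℝ] E μ := (innerSL ℝ ψ).smulRight ψ

/-- The Haar-basis element `e_w = 2^{ℓ(w)/2} (χ_{[w1]} - χ_{[w0]})`, as a function on `Ω`. -/
def haarFun (w : List Bool) : Ω → ℝ := fun x =>
  (2 : ℝ) ^ ((w.length : ℝ) / 2) *
    ((cylinder (w ++ [true])).indicator 1 x - (cylinder (w ++ [false])).indicator 1 x)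

lemma continuous_shiftMap : Continuous shiftMap :=
  continuous_pi fun n => continuous_apply (n + 1)

lemma continuous_consSeq (a : Bool) : Continuous (consSeq a) := by
  apply continuous_pi
  intro n
  cases n with
  | zero => exact continuous_const
  | succ k => exact continuous_apply k

/-- The Koopman operator on continuous functions: `f ↦ f ∘ σ`. -/
def koopmanC (f : C(Ω, ℝ)) : C(Ω, ℝ) := f.comp ⟨shiftMap, continuous_shiftMap⟩

/-- The Ruelle operator on continuous functions: `(Lf)(x) = (f(0x) + f(1x))/2`. -/
def ruelleC (f : C(Ω, ℝ)) : C(Ω, ℝ) :=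
  ⟨fun x => (f (consSeq false x) + f (consSeq true x)) / 2,
    ((f.continuous.comp (continuous_consSeq false)).add
      (f.continuous.comp (continuous_consSeq true))).div_const 2⟩

end

section Aux

variable {F G : Type*} [NormedAddCommGroup F] [InnerProductSpace ℝ F]
  [NormedAddCommGroup G] [NormedSpace ℝ G]

lemma bessel_two (a c x : F) (hac : ⟪a, c⟫ = 0) (ha : ‖a‖ ≤ 1) (hc : ‖c‖ ≤ 1) :
    ⟪a, x⟫ ^ 2 + ⟪c, x⟫ ^ 2 ≤ ‖x‖ ^ 2 := by
  have key : (0:ℝ) ≤ ⟪x - ⟪a, x⟫ • a - ⟪c, x⟫ • c, x - ⟪a, x⟫ • a - ⟪c, x⟫ • c⟫ :=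
    real_inner_self_nonneg
  have hca : ⟪c, a⟫ = (0:ℝ) := by rw [real_inner_comm]; exact hac
  have hxa : ⟪x, a⟫ = ⟪a, x⟫ := real_inner_comm a x
  have hxc : ⟪x, c⟫ = ⟪c, x⟫ := real_inner_comm c x
  simp only [inner_sub_left, inner_sub_right, real_inner_smul_left, real_inner_smul_right] at key
  rw [real_inner_self_eq_norm_sq x, real_inner_self_eq_norm_sq a, real_inner_self_eq_norm_sq c,
    hxa, hxc, hca, hac] at key
  have ha2 : ‖a‖ ^ 2 ≤ 1 := by nlinarith [norm_nonneg a]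
  have hc2 : ‖c‖ ^ 2 ≤ 1 := by nlinarith [norm_nonneg c]
  nlinarith [sq_nonneg ⟪a, x⟫, sq_nonneg ⟪c, x⟫]

lemma T_bound (a b c x : F) (hba : ⟪b, a⟫ = 0) (hac : ⟪a, c⟫ = 0)
    (ha : ‖a‖ ≤ 1) (hb : ‖b‖ ≤ 1) (hc : ‖c‖ ≤ 1) :
    ‖⟪a, x⟫ • b - ⟪c, x⟫ • a‖ ≤ ‖x‖ := by
  have h2 : ‖⟪a, x⟫ • b - ⟪c, x⟫ • a‖ ^ 2 ≤ ‖x‖ ^ 2 := by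
    rw [norm_sub_sq_real]
    have hbess := bessel_two a c x hac ha hc
    simp only [real_inner_smul_left, real_inner_smul_right, norm_smul, hba,
      Real.norm_eq_abs, mul_zero, zero_mul]
    have ha2 : ‖a‖ ^ 2 ≤ 1 := by nlinarith [norm_nonneg a]
    have hb2 : ‖b‖ ^ 2 ≤ 1 := by nlinarith [norm_nonneg b]
    have e1 : (|⟪a, x⟫| * ‖b‖) ^ 2 ≤ ⟪a, x⟫ ^ 2 := by
      rw [mul_pow, sq_abs]; nlinarith [sq_nonneg ⟪a, x⟫]
    have e2 : (|⟪c, x⟫| * ‖a‖) ^ 2 ≤ ⟪c, x⟫ ^ 2 := by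
      rw [mul_pow, sq_abs]; nlinarith [sq_nonneg ⟪c, x⟫]
    nlinarith
  have h3 := Real.sqrt_le_sqrt h2
  rwa [Real.sqrt_sq (norm_nonneg _), Real.sqrt_sq (norm_nonneg _)] at h3

lemma opNorm_eq_one' (B : F →L[ℝ] G) (hub : ∀ x, ‖B x‖ ≤ ‖x‖) (x₀ : F)
    (hx0 : ‖x₀‖ = 1) (hbx : ‖B x₀‖ = 1) : ‖B‖ = 1 :=
  le_antisymm (B.opNorm_le_bound zero_le_one (by simpa using hub))
    (by calc (1:ℝ) = ‖B x₀‖ := hbx.symm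
          _ ≤ ‖B‖ * ‖x₀‖ := B.le_opNorm x₀
          _ = ‖B‖ := by rw [hx0, mul_one])

end Aux

section Aux2

variable {μ : MeasureTheory.Measure Ω}

lemma commD_fst (K L A : E μ →L[ℝ] E μ) (p : HS μ) :
    (commD K L A p).fst = K (A p.snd) - A (K p.snd) := by
  simp [commD, dirac, diagRep, blockDiag, blockAntidiag]

lemma commD_snd (K L A : E μ →L[ℝ] E μ) (p : HS μ) :
    (commD K L A p).snd = L (A p.fst) - A (L p.fst) := by
  simp [commD, dirac, diagRep, blockDiag, blockAntidiag]

lemma commD_norm_one (K L A : E μ →L[ℝ] E μ) (ψ0 : E μ)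
    (h1 : ∀ x, ‖K (A x) - A (K x)‖ ≤ ‖x‖)
    (h2 : ∀ x, ‖L (A x) - A (L x)‖ ≤ ‖x‖)
    (hψ0 : ‖ψ0‖ = 1) (hval : ‖K (A ψ0) - A (K ψ0)‖ = 1) :
    ‖commD K L A‖ = 1 := by
  apply opNorm_eq_one' (commD K L A) ?_ ((WithLp.equiv 2 (E μ × E μ)).symm (0, ψ0))
  · rw [WithLp.equiv_symm_apply, WithLp.norm_toLp_snd, hψ0]
  · have heq : commD K L A ((WithLp.equiv 2 (E μ × E μ)).symm (0, ψ0)) =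
        (WithLp.equiv 2 (E μ × E μ)).symm (K (A ψ0) - A (K ψ0), 0) := by
      apply (WithLp.prodContinuousLinearEquiv 2 ℝ (E μ) (E μ)).injective
      ext
      · simp [commD_fst]
      · simp [commD_snd]
    rw [heq, WithLp.equiv_symm_apply, WithLp.norm_toLp_fst, hval]
  · intro p
    have e1 := WithLp.prod_norm_sq_eq_of_L2 (commD K L A p)
    have e2 := WithLp.prod_norm_sq_eq_of_L2 p
    rw [commD_fst, commD_snd] at e1
    have h3 : ‖commD K L A p‖ ^ 2 ≤ ‖p‖ ^ 2 := by
      rw [e1, e2]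
      have := h1 p.snd; have := h2 p.fst
      nlinarith [norm_nonneg (K (A p.snd) - A (K p.snd)), norm_nonneg (L (A p.fst) - A (L p.fst)),
        norm_nonneg p.fst, norm_nonneg p.snd]
    have h4 := Real.sqrt_le_sqrt h3
    rwa [Real.sqrt_sq (norm_nonneg _), Real.sqrt_sq (norm_nonneg _)] at h4

end Aux2

set_option maxHeartbeats 1000000 in
/-- If the unit vector `ψ` is in the kernel of `L`, then
`‖[D, π(ψ̂)]‖ = ‖K ψ̂ − ψ̂ K‖ = ‖L ψ̂ − ψ̂ L‖ = 1`; moreover the same holds if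
`ψ = K^k f` for some `k ≥ 1` and a unit vector `f` with `L f = 0`. -/
theorem stmt9
    (μ : Measure Ω) [IsProbabilityMeasure μ]
    (hμ : ∀ w : List Bool, μ (cylinder w) = (1 / 2) ^ w.length)
    (K L : E μ →L[ℝ] E μ)
    (hK : ∀ g : E μ, (K g : Ω → ℝ) =ᵐ[μ] fun x => g (shiftMap x))
    (hL : ∀ g : E μ, (L g : Ω → ℝ) =ᵐ[μ]
      fun x => (g (consSeq false x) + g (consSeq true x)) / 2)
    (hadj : ContinuousLinearMap.adjoint K = L)
    (hLK : L ∘L K = ContinuousLinearMap.id ℝ (E μ))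
    (ψ : E μ) (hψ : ‖ψ‖ = 1) :
    (L ψ = 0 →
      ‖commD K L (rankOneProj ψ)‖ = 1 ∧
      ‖K ∘L rankOneProj ψ - rankOneProj ψ ∘L K‖ = 1 ∧
      ‖L ∘L rankOneProj ψ - rankOneProj ψ ∘L L‖ = 1) ∧
    (∀ k : ℕ, 1 ≤ k → ∀ f : E μ, ‖f‖ = 1 → L f = 0 → ψ = (K ^ k) f →
      ‖commD K L (rankOneProj ψ)‖ = 1) := by
  -- basic inner-product facts
  have hinnerK : ∀ x y : E μ, ⟪x, K y⟫ = ⟪L x, y⟫ := by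
    intro x y; rw [← hadj, ContinuousLinearMap.adjoint_inner_left]
  have hinnerL : ∀ x y : E μ, ⟪x, L y⟫ = ⟪K x, y⟫ := by
    intro x y; rw [← hadj, ContinuousLinearMap.adjoint_inner_right]
  have hLKapp : ∀ x : E μ, L (K x) = x := by
    intro x
    have := congrArg (fun T : E μ →L[ℝ] E μ => T x) hLK
    simpa using this
  have hKinner : ∀ x y : E μ, ⟪K x, K y⟫ = ⟪x, y⟫ := by
    intro x y; rw [hinnerK, hLKapp]
  have hKnorm : ∀ x : E μ, ‖K x‖ = ‖x‖ := by
    intro x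
    have h := hKinner x x
    rw [real_inner_self_eq_norm_sq, real_inner_self_eq_norm_sq] at h
    have := Real.sqrt_le_sqrt h.le
    nlinarith [norm_nonneg (K x), norm_nonneg x]
  have hψψ : ⟪ψ, ψ⟫ = (1:ℝ) := by rw [real_inner_self_eq_norm_sq, hψ]; norm_num
  -- pointwise formulas for the commutators
  have hB₁ : ∀ x : E μ, (K ∘L rankOneProj ψ - rankOneProj ψ ∘L K) x
      = ⟪ψ, x⟫ • K ψ - ⟪L ψ, x⟫ • ψ := by
    intro x
    simp [rankOneProj, hinnerK ψ x, _root_.map_smul]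
  have hB₂ : ∀ x : E μ, (L ∘L rankOneProj ψ - rankOneProj ψ ∘L L) x
      = ⟪ψ, x⟫ • L ψ - ⟪K ψ, x⟫ • ψ := by
    intro x
    simp [rankOneProj, hinnerL ψ x, _root_.map_smul]
  constructor
  · -- case Lψ = 0
    intro hLψ
    have hψKψ : ⟪ψ, K ψ⟫ = (0:ℝ) := by rw [hinnerK, hLψ, inner_zero_left]
    have hKψψ : ⟪K ψ, ψ⟫ = (0:ℝ) := by rw [real_inner_comm]; exact hψKψ
    have hKψn : ‖K ψ‖ = 1 := by rw [hKnorm, hψ]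
    have hub₁ : ∀ x, ‖(K ∘L rankOneProj ψ - rankOneProj ψ ∘L K) x‖ ≤ ‖x‖ := by
      intro x
      rw [hB₁, hLψ]
      exact T_bound ψ (K ψ) 0 x hKψψ (by simp) hψ.le hKψn.le (by simp)
    have hval₁ : ‖(K ∘L rankOneProj ψ - rankOneProj ψ ∘L K) ψ‖ = 1 := by
      rw [hB₁, hLψ, hψψ]
      simp [hKψn]
    have hub₂ : ∀ x, ‖(L ∘L rankOneProj ψ - rankOneProj ψ ∘L L) x‖ ≤ ‖x‖ := by
      intro x
      rw [hB₂, hLψ]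
      exact T_bound ψ 0 (K ψ) x (by simp) hψKψ hψ.le (by simp) hKψn.le
    have hval₂ : ‖(L ∘L rankOneProj ψ - rankOneProj ψ ∘L L) (K ψ)‖ = 1 := by
      rw [hB₂, hLψ]
      have : ⟪K ψ, K ψ⟫ = (1:ℝ) := by rw [hKinner, hψψ]
      rw [this]
      simp [hψ]
    refine ⟨?_, opNorm_eq_one' _ hub₁ ψ hψ hval₁, opNorm_eq_one' _ hub₂ (K ψ) hKψn hval₂⟩
    exact commD_norm_one K L (rankOneProj ψ) ψ
      (by intro x; have := hub₁ x; simpa using this)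
      (by intro x; have := hub₂ x; simpa using this)
      hψ (by have := hval₁; simpa using this)
  · -- case ψ = K^k f
    intro k hk f hf hLf hψf
    obtain ⟨m, rfl⟩ : ∃ m, k = m + 1 := ⟨k - 1, by omega⟩
    set u : E μ := (K ^ m) f with hu
    have hψKu : ψ = K u := by
      rw [hψf, hu, pow_succ']
      rfl
    have hKpownorm : ∀ j : ℕ, ‖(K ^ j) f‖ = 1 := by
      intro j
      induction j with
      | zero => simpa using hf
      | succ n ih =>
        rw [pow_succ', ContinuousLinearMap.mul_apply, hKnorm]
        exact ih
    have hun : ‖u‖ = 1 := hKpownorm m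
    have horth : ∀ j : ℕ, ⟪(K ^ j) f, K ((K ^ j) f)⟫ = (0:ℝ) := by
      intro j
      induction j with
      | zero =>
        simp only [pow_zero, ContinuousLinearMap.one_apply]
        rw [hinnerK, hLf, inner_zero_left]
      | succ n ih =>
        rw [pow_succ', ContinuousLinearMap.mul_apply, hKinner]
        exact ih
    have huψ : ⟪u, ψ⟫ = (0:ℝ) := by
      rw [hψKu, hu]; exact horth m
    have hψu : ⟪ψ, u⟫ = (0:ℝ) := by rw [real_inner_comm]; exact huψ
    have hψKψ : ⟪ψ, K ψ⟫ = (0:ℝ) := by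
      rw [hψKu, hKinner, hu]; exact horth m
    have hKψψ : ⟪K ψ, ψ⟫ = (0:ℝ) := by rw [real_inner_comm]; exact hψKψ
    have hKψn : ‖K ψ‖ = 1 := by rw [hKnorm, hψ]
    have hLψ : L ψ = u := by rw [hψKu, hLKapp]
    have hub₁ : ∀ x, ‖(K ∘L rankOneProj ψ - rankOneProj ψ ∘L K) x‖ ≤ ‖x‖ := by
      intro x
      rw [hB₁, hLψ]
      exact T_bound ψ (K ψ) u x hKψψ hψu hψ.le hKψn.le hun.le
    have hub₂ : ∀ x, ‖(L ∘L rankOneProj ψ - rankOneProj ψ ∘L L) x‖ ≤ ‖x‖ := by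
      intro x
      rw [hB₂, hLψ]
      exact T_bound ψ u (K ψ) x huψ hψKψ hψ.le hun.le hKψn.le
    have hval₁ : ‖(K ∘L rankOneProj ψ - rankOneProj ψ ∘L K) ψ‖ = 1 := by
      rw [hB₁, hLψ, hψψ, huψ]
      simp [hKψn]
    exact commD_norm_one K L (rankOneProj ψ) ψ
      (by intro x; have := hub₁ x; simpa using this)
      (by intro x; have := hub₂ x; simpa using this)
      hψ (by have := hval₁; simpa using this)
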